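/- The 𝔤-module W is faithful if and only if the Fock representation is faithful; explicitly: (for all x ∈ 𝔤, if x·w = 0 for every w ∈ W then x = 0) holds if and only if (for all x ∈ 𝔤 and k ∈ K, if f_x = k·id_P then x = 0 and k = 0) holds. -/

import Mathlib

open scoped Classical

/-- Multiplication by the variable `X γ` on the bosonic Fock space `K[X_α : α ∈ I]`. -/
noncomputable def Mop (K : Type*) [CommSemiring K] {I : Type*} (γ : I) :
    Module.End K (MvPolynomial I K) :=
  LinearMap.mulLeft K (MvPolynomial.X γ)

/-- The partial derivative `∂/∂X_α` on the bosonic Fock space `K[X_α : α ∈ I]`. -/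
noncomputable def Dop (K : Type*) [CommSemiring K] {I : Type*} (α : I) :
    Module.End K (MvPolynomial I K) :=
  (MvPolynomial.pderiv α).toLinearMap

/-- The normally ordered quadratic piece `N(γ,α)`. -/
noncomputable def Nop (K : Type*) [CommSemiring K] {I : Type*} (J : Set I) (γ α : I) :
    Module.End K (MvPolynomial I K) :=
  if γ = α ∧ α ∈ J then Dop K α ∘ₗ Mop K α else Mop K γ ∘ₗ Dop K α

/-- The normally ordered quadratic operator
`f_x = Σ_{α,γ∈I} x_γ^α N(γ,α)` on bosonic Fock space, where
`x_γ^α = (b.repr ⁅x, b α⁆) γ` are the matrix coefficients of `x` on `W`. -/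
noncomputable def fock {K : Type*} [Field K] {L : Type*} [LieRing L] [LieAlgebra K L]
    {W : Type*} [AddCommGroup W] [Module K W] [LieRingModule L W] [LieModule K L W]
    {I : Type*} [Fintype I] (b : Module.Basis I K W) (J : Set I) (x : L) :
    Module.End K (MvPolynomial I K) :=
  ∑ α : I, ∑ γ : I, b.repr ⁅x, b α⁆ γ • Nop K J γ α

open MvPolynomial in
private lemma Nop_one' {K : Type*} [CommSemiring K] {I : Type*} (J : Set I) (γ α : I) :
    Nop K J γ α (1 : MvPolynomial I K) = if γ = α ∧ α ∈ J then 1 else 0 := by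
  unfold Nop Dop Mop
  split_ifs with h <;> simp

open MvPolynomial in
private lemma Nop_X' {K : Type*} [CommSemiring K] {I : Type*} (J : Set I) (γ α β : I) :
    Nop K J γ α (X β : MvPolynomial I K) =
      if γ = α ∧ α ∈ J then (X β + if α = β then X α else 0)
      else (if α = β then X γ else 0) := by
  have hDM : (Dop K α ∘ₗ Mop K α) (X β : MvPolynomial I K)
      = X β + if α = β then X α else 0 := by
    by_cases h2 : α = β
    · subst h2; simp [Dop, Mop, pderiv_mul]
    · simp [Dop, Mop, pderiv_mul, pderiv_X_of_ne (Ne.symm h2), h2]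
  have hMD : (Mop K γ ∘ₗ Dop K α) (X β : MvPolynomial I K)
      = if α = β then X γ else 0 := by
    by_cases h2 : α = β
    · subst h2; simp [Dop, Mop]
    · simp [Dop, Mop, pderiv_X_of_ne (Ne.symm h2), h2]
  unfold Nop
  split_ifs with h <;> simp_all

open MvPolynomial in
private lemma coeffXsingle {K : Type*} [CommSemiring K] {I : Type*} (γ δ : I) :
    coeff (Finsupp.single δ 1) (X γ : MvPolynomial I K) = if γ = δ then 1 else 0 := by
  rw [coeff_X']
  simp [Finsupp.single_left_inj, eq_comm]

private lemma sum_ite_and' {I : Type*} {M : Type*} [Fintype I] [AddCommMonoid M]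
    (α : I) (P : Prop) [Decidable P] (f : I → M) :
    ∑ γ : I, (if γ = α ∧ P then f γ else 0) = if P then f α else 0 := by
  by_cases hP : P <;> simp [hP]

open MvPolynomial in
private lemma fock_apply_one {K : Type*} [Field K] {L : Type*} [LieRing L] [LieAlgebra K L]
    {W : Type*} [AddCommGroup W] [Module K W] [LieRingModule L W] [LieModule K L W]
    {I : Type*} [Fintype I] (b : Module.Basis I K W) (J : Set I) (x : L) :
    fock b J x (1 : MvPolynomial I K)
      = (∑ α : I, if α ∈ J then b.repr ⁅x, b α⁆ α else 0) • 1 := by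
  simp [fock, LinearMap.sum_apply, LinearMap.smul_apply, Nop_one', smul_ite,
    sum_ite_and', Finset.sum_smul, ite_smul]

open MvPolynomial in
private lemma fock_coeff_X {K : Type*} [Field K] {L : Type*} [LieRing L] [LieAlgebra K L]
    {W : Type*} [AddCommGroup W] [Module K W] [LieRingModule L W] [LieModule K L W]
    {I : Type*} [Fintype I] (b : Module.Basis I K W) (J : Set I) (x : L) (β δ : I) :
    coeff (Finsupp.single δ 1) (fock b J x (X β : MvPolynomial I K))
      = (if δ = β then (∑ α : I, if α ∈ J then b.repr ⁅x, b α⁆ α else 0) else 0)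
        + b.repr ⁅x, b β⁆ δ := by
  have inner : ∀ α : I, (∑ γ : I,
        if γ = α ∧ α ∈ J then
          (if β = δ then b.repr ⁅x, b α⁆ γ else 0) +
            (if α = β then if α = δ then b.repr ⁅x, b α⁆ γ else 0 else 0)
        else if α = β then if γ = δ then b.repr ⁅x, b α⁆ γ else 0 else 0)
      = (if α = β then b.repr ⁅x, b β⁆ δ else 0)
        + (if α ∈ J then (if β = δ then b.repr ⁅x, b α⁆ α else 0) else 0) := by
    intro α
    by_cases hJ : α ∈ J <;> by_cases hb : α = β
    · subst hb
      by_cases hd : δ = α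
      · subst hd
        rw [Finset.sum_eq_single δ]
        · simp [hJ]
        · intro g _ hg; simp [hJ, hg]
        · simp
      · have had : ¬α = δ := fun h => hd h.symm
        rw [Finset.sum_eq_single δ]
        · simp [hJ, hd, had]
        · intro g _ hg
          by_cases hga : g = α <;> simp [hJ, hg, hga, hd, had]
        · simp
    · simp only [hb, if_false]
      rw [Finset.sum_eq_single α]
      · simp [hJ, hb]
      · intro g _ hg; simp [hJ, hg, hb]
      · simp
    · subst hb; simp [hJ]
    · simp [hJ, hb]
  simp only [fock, LinearMap.sum_apply, LinearMap.smul_apply, Nop_X', coeff_sum,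
    coeff_smul, coeff_add, apply_ite (coeff (Finsupp.single δ 1)), coeffXsingle,
    smul_ite, smul_add, mul_ite, ite_mul, coeff_zero, smul_zero, smul_eq_mul,
    mul_one, mul_zero]
  rw [Finset.sum_congr rfl fun α _ => inner α, Finset.sum_add_distrib]
  by_cases hd : β = δ <;> simp [hd, Finset.sum_ite_eq', eq_comm, add_comm]

/-- the `𝔤`-module `W` is faithful if and only if the bosonic Fock
representation `(x,k) ↦ f_x − k·id_P` is faithful; explicitly: (for all `x ∈ 𝔤`,
if `x·w = 0` for every `w ∈ W` then `x = 0`) holds iff (for all `x ∈ 𝔤` and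
`k ∈ K`, if `f_x = k·id_P` then `x = 0` and `k = 0`) holds. -/
theorem stmt17 (K : Type*) [Field K] [CharZero K]
    (L : Type*) [LieRing L] [LieAlgebra K L]
    (W : Type*) [AddCommGroup W] [Module K W] [LieRingModule L W] [LieModule K L W]
    (I : Type*) [Fintype I] (b : Module.Basis I K W) (J : Set I) :
    (∀ x : L, (∀ w : W, ⁅x, w⁆ = 0) → x = 0) ↔
    (∀ (x : L) (k : K),
      fock b J x = k • (1 : Module.End K (MvPolynomial I K)) → x = 0 ∧ k = 0) := by
  constructor
  · intro hW x k h
    -- constant: c = k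
    have h1 : (∑ α : I, if α ∈ J then b.repr ⁅x, b α⁆ α else 0) = k := by
      have h0 := congrArg (MvPolynomial.coeff (0 : I →₀ ℕ))
        (LinearMap.congr_fun h (1 : MvPolynomial I K))
      rw [fock_apply_one] at h0
      simpa using h0
    -- all matrix coefficients vanish
    have hx : ∀ β : I, ⁅x, b β⁆ = 0 := by
      intro β
      have hc : ∀ δ : I, b.repr ⁅x, b β⁆ δ = 0 := by
        intro δ
        have h2 := congrArg (MvPolynomial.coeff (Finsupp.single δ 1))
          (LinearMap.congr_fun h (MvPolynomial.X β))
        rw [fock_coeff_X] at h2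
        simp only [LinearMap.smul_apply, Module.End.one_apply,
          MvPolynomial.coeff_smul, coeffXsingle, smul_eq_mul, mul_ite, mul_one,
          mul_zero] at h2
        by_cases hd : δ = β
        · subst hd
          rw [h1] at h2
          simpa using h2
        · have hbd : ¬β = δ := fun hh => hd hh.symm
          simpa [hd, hbd] using h2
      have : b.repr ⁅x, b β⁆ = 0 := Finsupp.ext hc
      exact (LinearEquiv.map_eq_zero_iff b.repr).mp this
    have hx0 : x = 0 := by
      apply hW
      intro w
      have hE : (LieModule.toEnd K L W) x = 0 := by
        apply b.ext
        intro i
        simpa using hx i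
      simpa using LinearMap.congr_fun hE w
    refine ⟨hx0, ?_⟩
    rw [← h1]
    simp [hx]
  · intro hF x hx
    exact (hF x 0 (by simp [fock, hx])).1
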